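/- Let X₀, …, X_n be independent real-valued random variables and let Φ, Ψ : ℝ^{n+1} → ℝ be bounded Borel functions such that for every index i and every fixed choice of the other coordinates, x_i ↦ Φ(x₀,…,x_i,…,x_n) and x_i ↦ Ψ(x₀,…,x_i,…,x_n) are monotone with the same monotony (which may depend on the fixed coordinates x₀,…,x_{i−1}). Then E[Φ(X₀,…,X_n)Ψ(X₀,…,X_n)] ≥ E[Φ(X₀,…,X_n)]·E[Ψ(X₀,…,X_n)]. -/

import Mathlib

open MeasureTheory ProbabilityTheory

private lemma integrable_of_bound' {α : Type*} [MeasurableSpace α] (μ : Measure α)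
    [IsFiniteMeasure μ] {f : α → ℝ} (hf : Measurable f) {C : ℝ} (hC : ∀ x, |f x| ≤ C) :
    Integrable f μ :=
  ⟨hf.aestronglyMeasurable,
    HasFiniteIntegral.of_bounded (C := C) (Filter.Eventually.of_forall fun x => by
      simpa [Real.norm_eq_abs] using hC x)⟩

private lemma abs_integral_le_of_bound' {α : Type*} [MeasurableSpace α] (μ : Measure α)
    [IsProbabilityMeasure μ] {f : α → ℝ} (hf : Measurable f) {C : ℝ} (hC : ∀ x, |f x| ≤ C) :
    |∫ x, f x ∂μ| ≤ C := by
  calc |∫ x, f x ∂μ| ≤ ∫ x, |f x| ∂μ := by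
        simpa [Real.norm_eq_abs] using norm_integral_le_integral_norm f
    _ ≤ ∫ _x, C ∂μ := integral_mono (integrable_of_bound' μ hf hC).abs
        (integrable_const C) hC
    _ = C := by simp

private lemma int_sub' {α : Type*} [MeasurableSpace α] {μ : Measure α} {f g : α → ℝ}
    (hf : Integrable f μ) (hg : Integrable g μ) : Integrable (fun x => f x - g x) μ := by
  simpa [Pi.sub_def] using hf.sub hg

private lemma chebyshev_pair' {α : Type*} [MeasurableSpace α] (μ : Measure α)
    [IsProbabilityMeasure μ] {f g : α → ℝ} (hf : Measurable f) (hg : Measurable g)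
    (hfb : ∃ C, ∀ x, |f x| ≤ C) (hgb : ∃ C, ∀ x, |g x| ≤ C)
    (hco : ∀ x y, 0 ≤ (f x - f y) * (g x - g y)) :
    ∫ x, f x * g x ∂μ ≥ (∫ x, f x ∂μ) * ∫ x, g x ∂μ := by
  obtain ⟨C, hC⟩ := hfb
  obtain ⟨D, hD⟩ := hgb
  have hfi : Integrable f μ := integrable_of_bound' μ hf hC
  have hgi : Integrable g μ := integrable_of_bound' μ hg hD
  have hfgb : ∀ x, |f x * g x| ≤ |C| * |D| := fun x => by
    rw [abs_mul]
    exact mul_le_mul ((hC x).trans (le_abs_self C)) ((hD x).trans (le_abs_self D))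
      (abs_nonneg _) (abs_nonneg _)
  have hfgi : Integrable (fun x => f x * g x) μ :=
    integrable_of_bound' μ (hf.mul hg) hfgb
  set If := ∫ x, f x ∂μ with hIf
  set Ig := ∫ x, g x ∂μ with hIg
  set Ifg := ∫ x, f x * g x ∂μ with hIfg
  have key : ∀ x, ∫ y, (f x - f y) * (g x - g y) ∂μ
      = f x * g x - f x * Ig - g x * If + Ifg := by
    intro x
    have h1 : (fun y => (f x - f y) * (g x - g y))
        = fun y => ((f x * g x - f x * g y) - g x * f y) + f y * g y := by
      funext y; ring
    rw [h1]
    rw [integral_add (int_sub' (int_sub' (integrable_const (f x * g x))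
      (hgi.const_mul (f x))) (hfi.const_mul (g x))) hfgi]
    rw [integral_sub (int_sub' (integrable_const (f x * g x)) (hgi.const_mul (f x)))
      (hfi.const_mul (g x))]
    rw [integral_sub (integrable_const (f x * g x)) (hgi.const_mul (f x))]
    rw [integral_const, integral_const_mul, integral_const_mul]
    simp only [measure_univ, probReal_univ, ENNReal.toReal_one, smul_eq_mul, one_mul, ← hIf, ← hIg, ← hIfg]
    try ring
  have hnn : 0 ≤ ∫ x, (f x * g x - f x * Ig - g x * If + Ifg) ∂μ := by
    rw [← integral_congr_ae (Filter.Eventually.of_forall key)]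
    exact integral_nonneg fun x => integral_nonneg fun y => hco x y
  have hcalc : ∫ x, (f x * g x - f x * Ig - g x * If + Ifg) ∂μ
      = 2 * (Ifg - If * Ig) := by
    have h1 : (fun x => f x * g x - f x * Ig - g x * If + Ifg)
        = fun x => ((f x * g x - f x * Ig) - g x * If) + Ifg := by funext x; ring
    rw [h1]
    rw [integral_add (int_sub' (int_sub' hfgi (hfi.mul_const Ig)) (hgi.mul_const If))
      (integrable_const Ifg)]
    rw [integral_sub (int_sub' hfgi (hfi.mul_const Ig)) (hgi.mul_const If)]
    rw [integral_sub hfgi (hfi.mul_const Ig)]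
    rw [integral_const, integral_mul_const, integral_mul_const]
    simp only [measure_univ, probReal_univ, ENNReal.toReal_one, smul_eq_mul, one_mul, ← hIf, ← hIg, ← hIfg]
    try ring
  rw [hcalc] at hnn
  linarith

private lemma measurable_cons' {n : ℕ} :
    Measurable (fun p : ℝ × (Fin (n + 1) → ℝ) => (Fin.cons p.1 p.2 : Fin (n + 2) → ℝ)) := by
  rw [measurable_pi_iff]
  intro j
  refine Fin.cases ?_ ?_ j
  · simpa using measurable_fst
  · intro k
    simpa [Function.comp_def] using (measurable_pi_apply k).comp measurable_snd

private lemma pi_comonotone : ∀ (n : ℕ) (ν : Fin (n + 1) → Measure ℝ)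
    (_ : ∀ i, IsProbabilityMeasure (ν i))
    (Φ Ψ : (Fin (n + 1) → ℝ) → ℝ) (_ : Measurable Φ) (_ : Measurable Ψ)
    (_ : ∃ C, ∀ x, |Φ x| ≤ C) (_ : ∃ C, ∀ x, |Ψ x| ≤ C)
    (_ : ∀ i : Fin (n + 1), ∀ x y : Fin (n + 1) → ℝ, (∀ j, j < i → x j = y j) →
      ((Monotone (fun t => Φ (Function.update x i t)) ∧
        Monotone (fun t => Ψ (Function.update x i t)) ∧
        Monotone (fun t => Φ (Function.update y i t)) ∧
        Monotone (fun t => Ψ (Function.update y i t))) ∨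
       (Antitone (fun t => Φ (Function.update x i t)) ∧
        Antitone (fun t => Ψ (Function.update x i t)) ∧
        Antitone (fun t => Φ (Function.update y i t)) ∧
        Antitone (fun t => Ψ (Function.update y i t))))),
    ∫ x, Φ x * Ψ x ∂(Measure.pi ν)
      ≥ (∫ x, Φ x ∂(Measure.pi ν)) * ∫ x, Ψ x ∂(Measure.pi ν) := by
  intro n
  induction n with
  | zero =>
    intro ν hν Φ Ψ hΦm hΨm hΦb hΨb hsec
    haveI := hν
    haveI : IsProbabilityMeasure (Measure.pi ν) := by infer_instance
    refine chebyshev_pair' _ hΦm hΨm hΦb hΨb ?_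
    intro x y
    have hxy : ∀ t : ℝ, Function.update x 0 t = Function.update y 0 t := by
      intro t; funext j
      have : j = 0 := Fin.fin_one_eq_zero j
      subst this; simp
    have hx : Φ x = Φ (Function.update y 0 (x 0)) := by rw [← hxy]; simp
    have hy : Φ y = Φ (Function.update y 0 (y 0)) := by simp
    have hx' : Ψ x = Ψ (Function.update y 0 (x 0)) := by rw [← hxy]; simp
    have hy' : Ψ y = Ψ (Function.update y 0 (y 0)) := by simp
    rw [hx, hy, hx', hy']
    rcases hsec 0 y y (fun j hj => absurd hj (by simp)) with ⟨h1, h2, _, _⟩ | ⟨h1, h2, _, _⟩ <;>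
      rcases le_total (x 0) (y 0) with h | h
    · have a1 := h1 h; have a2 := h2 h; nlinarith
    · have a1 := h1 h; have a2 := h2 h; nlinarith
    · have a1 := h1 h; have a2 := h2 h; nlinarith
    · have a1 := h1 h; have a2 := h2 h; nlinarith
  | succ m IH =>
    intro ν hν Φ Ψ hΦm hΨm hΦb hΨb hsec
    haveI := hν
    obtain ⟨C, hC⟩ := hΦb
    obtain ⟨D, hD⟩ := hΨb
    set ν' : Fin (m + 1) → Measure ℝ := fun j => ν j.succ with hν'
    haveI : ∀ j, IsProbabilityMeasure (ν' j) := fun j => hν _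
    haveI : IsProbabilityMeasure (Measure.pi ν') := by infer_instance
    haveI : IsProbabilityMeasure (ν 0) := hν 0
    have hmp := measurePreserving_piFinSuccAbove ν 0
    set e := MeasurableEquiv.piFinSuccAbove (fun _ : Fin (m + 2) => ℝ) 0 with he
    have hsymm : ∀ p : ℝ × (Fin (m + 1) → ℝ), e.symm p = Fin.cons p.1 p.2 := by
      intro p
      have h0 : e.symm p = Fin.insertNth 0 p.1 p.2 := rfl
      rw [h0, Fin.insertNth_zero']
    have hsa : (fun j : Fin (m + 1) => ν ((0 : Fin (m + 2)).succAbove j)) = ν' := by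
      funext j; simp [hν']
    rw [hsa] at hmp
    have hchange : ∀ (h : (Fin (m + 2) → ℝ) → ℝ), Measurable h → (∃ B, ∀ z, |h z| ≤ B) →
        ∫ x, h x ∂(Measure.pi ν) = ∫ t, ∫ x, h (Fin.cons t x) ∂(Measure.pi ν') ∂(ν 0) := by
      intro h hm hb
      obtain ⟨B, hB⟩ := hb
      rw [← (hmp.symm e).integral_comp e.symm.measurableEmbedding h]
      have heq : (fun p : ℝ × (Fin (m + 1) → ℝ) => h (e.symm p))
          = fun p => h (Fin.cons p.1 p.2) := by funext p; rw [hsymm]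
      rw [heq, integral_prod]
      exact integrable_of_bound' _ (hm.comp measurable_cons') (fun p => hB _)
    set F : ℝ → ℝ := fun t => ∫ x, Φ (Fin.cons t x) ∂(Measure.pi ν') with hF
    set G : ℝ → ℝ := fun t => ∫ x, Ψ (Fin.cons t x) ∂(Measure.pi ν') with hG
    set H : ℝ → ℝ := fun t => ∫ x, Φ (Fin.cons t x) * Ψ (Fin.cons t x) ∂(Measure.pi ν')
      with hH
    have hconsm : ∀ t : ℝ,
        Measurable (fun x : Fin (m + 1) → ℝ => (Fin.cons t x : Fin (m + 2) → ℝ)) :=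
      fun t => measurable_cons'.comp (measurable_const.prodMk measurable_id)
    -- inner inequality from IH
    have hinner : ∀ t : ℝ, F t * G t ≤ H t := by
      intro t
      refine IH ν' (fun j => hν _) (fun x => Φ (Fin.cons t x)) (fun x => Ψ (Fin.cons t x))
        (hΦm.comp (hconsm t)) (hΨm.comp (hconsm t)) ⟨C, fun x => hC _⟩ ⟨D, fun x => hD _⟩ ?_
      intro i x y hxy
      have hagree : ∀ j : Fin (m + 2), j < i.succ →
          (Fin.cons t x : Fin (m + 2) → ℝ) j = (Fin.cons t y : Fin (m + 2) → ℝ) j := by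
        intro j
        refine Fin.cases ?_ ?_ j
        · intro _; simp
        · intro k hk
          have hk' : k < i := Fin.succ_lt_succ_iff.mp hk
          simp [hxy k hk']
      have := hsec i.succ (Fin.cons t x) (Fin.cons t y) hagree
      simpa [Fin.cons_update] using this
    -- measurability of F, G, H
    have hFsm : ∀ (h : (Fin (m + 2) → ℝ) → ℝ), Measurable h →
        Measurable (fun t => ∫ x, h (Fin.cons t x) ∂(Measure.pi ν')) := by
      intro h hm
      have : StronglyMeasurable
          (Function.uncurry fun (t : ℝ) (x : Fin (m + 1) → ℝ) => h (Fin.cons t x)) :=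
        (hm.comp measurable_cons').stronglyMeasurable
      exact this.integral_prod_right.measurable
    have hFm : Measurable F := hFsm Φ hΦm
    have hGm : Measurable G := hFsm Ψ hΨm
    have hHm : Measurable H := hFsm _ (hΦm.mul hΨm)
    have hFb : ∀ t, |F t| ≤ |C| :=
      fun t => abs_integral_le_of_bound' _ (hΦm.comp (hconsm t))
        (fun x => (hC _).trans (le_abs_self C))
    have hGb : ∀ t, |G t| ≤ |D| :=
      fun t => abs_integral_le_of_bound' _ (hΨm.comp (hconsm t))
        (fun x => (hD _).trans (le_abs_self D))
    have hHb : ∀ t, |H t| ≤ |C| * |D| :=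
      fun t => abs_integral_le_of_bound' _ ((hΦm.comp (hconsm t)).mul (hΨm.comp (hconsm t)))
        (fun x => by
          rw [Pi.mul_apply, abs_mul]
          exact mul_le_mul ((hC _).trans (le_abs_self C)) ((hD _).trans (le_abs_self D))
            (abs_nonneg _) (abs_nonneg _))
    -- dichotomy for the first coordinate
    have branch : (∀ x : Fin (m + 2) → ℝ, Monotone (fun t => Φ (Function.update x 0 t)) ∧
          Monotone (fun t => Ψ (Function.update x 0 t))) ∨
        (∀ x : Fin (m + 2) → ℝ, Antitone (fun t => Φ (Function.update x 0 t)) ∧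
          Antitone (fun t => Ψ (Function.update x 0 t))) := by
      by_cases hmono : ∀ x : Fin (m + 2) → ℝ, Monotone (fun t => Φ (Function.update x 0 t)) ∧
          Monotone (fun t => Ψ (Function.update x 0 t))
      · exact Or.inl hmono
      · push_neg at hmono
        obtain ⟨x₀, hx₀⟩ := hmono
        refine Or.inr fun x => ?_
        rcases hsec 0 x₀ x (fun j hj => absurd hj (by simp)) with ⟨h1, h2, _, _⟩ | ⟨_, _, h3, h4⟩
        · exact absurd h2 (hx₀ h1)
        · exact ⟨h3, h4⟩
    have hcons_upd : ∀ (x : Fin (m + 1) → ℝ) (t : ℝ),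
        (Fin.cons t x : Fin (m + 2) → ℝ) = Function.update (Fin.cons 0 x) 0 t := by
      intro x t; rw [Fin.update_cons_zero]
    -- F, G are comonotone
    have hco : ∀ t s, 0 ≤ (F t - F s) * (G t - G s) := by
      have hmonoFG : ∀ (h : (Fin (m + 2) → ℝ) → ℝ), Measurable h → (∀ z, |h z| ≤ |C| + |D|) →
          (∀ x : Fin (m + 2) → ℝ, Monotone (fun t => h (Function.update x 0 t))) →
          Monotone (fun t => ∫ x, h (Fin.cons t x) ∂(Measure.pi ν')) := by
        intro h hm hb hmono a b hab
        refine integral_mono (integrable_of_bound' _ (hm.comp (hconsm a)) (fun x => hb _))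
          (integrable_of_bound' _ (hm.comp (hconsm b)) (fun x => hb _)) fun x => ?_
        rw [hcons_upd x a, hcons_upd x b]
        exact hmono (Fin.cons 0 x) hab
      have hantiFG : ∀ (h : (Fin (m + 2) → ℝ) → ℝ), Measurable h → (∀ z, |h z| ≤ |C| + |D|) →
          (∀ x : Fin (m + 2) → ℝ, Antitone (fun t => h (Function.update x 0 t))) →
          Antitone (fun t => ∫ x, h (Fin.cons t x) ∂(Measure.pi ν')) := by
        intro h hm hb hanti a b hab
        refine integral_mono (integrable_of_bound' _ (hm.comp (hconsm b)) (fun x => hb _))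
          (integrable_of_bound' _ (hm.comp (hconsm a)) (fun x => hb _)) fun x => ?_
        rw [hcons_upd x a, hcons_upd x b]
        exact hanti (Fin.cons 0 x) hab
      have hΦb' : ∀ z, |Φ z| ≤ |C| + |D| := fun z =>
        (hC z).trans ((le_abs_self C).trans (le_add_of_nonneg_right (abs_nonneg D)))
      have hΨb' : ∀ z, |Ψ z| ≤ |C| + |D| := fun z =>
        (hD z).trans ((le_abs_self D).trans (le_add_of_nonneg_left (abs_nonneg C)))
      rcases branch with hb | hb
      · have hFmono : Monotone F := hmonoFG Φ hΦm hΦb' (fun x => (hb x).1)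
        have hGmono : Monotone G := hmonoFG Ψ hΨm hΨb' (fun x => (hb x).2)
        intro t s
        rcases le_total t s with h | h
        · have := hFmono h; have := hGmono h; nlinarith
        · have := hFmono h; have := hGmono h; nlinarith
      · have hFanti : Antitone F := hantiFG Φ hΦm hΦb' (fun x => (hb x).1)
        have hGanti : Antitone G := hantiFG Ψ hΨm hΨb' (fun x => (hb x).2)
        intro t s
        rcases le_total t s with h | h
        · have := hFanti h; have := hGanti h; nlinarith
        · have := hFanti h; have := hGanti h; nlinarith
    -- final chain
    have e1 : ∫ x, Φ x * Ψ x ∂(Measure.pi ν) = ∫ t, H t ∂(ν 0) :=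
      hchange (fun z => Φ z * Ψ z) (hΦm.mul hΨm)
        ⟨|C| * |D|, fun z => by
          rw [abs_mul]
          exact mul_le_mul ((hC _).trans (le_abs_self C)) ((hD _).trans (le_abs_self D))
            (abs_nonneg _) (abs_nonneg _)⟩
    have e2 : ∫ x, Φ x ∂(Measure.pi ν) = ∫ t, F t ∂(ν 0) := hchange Φ hΦm ⟨C, hC⟩
    have e3 : ∫ x, Ψ x ∂(Measure.pi ν) = ∫ t, G t ∂(ν 0) := hchange Ψ hΨm ⟨D, hD⟩
    rw [e1, e2, e3]
    have step1 : ∫ t, F t * G t ∂(ν 0) ≤ ∫ t, H t ∂(ν 0) := by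
      refine integral_mono (integrable_of_bound' _ (hFm.mul hGm) (C := |C| * |D|) ?_)
        (integrable_of_bound' _ hHm hHb) hinner
      intro t
      rw [abs_mul]
      exact mul_le_mul (hFb t) (hGb t) (abs_nonneg _) (abs_nonneg _)
    have step2 : (∫ t, F t ∂(ν 0)) * ∫ t, G t ∂(ν 0) ≤ ∫ t, F t * G t ∂(ν 0) :=
      chebyshev_pair' _ hFm hGm ⟨|C|, hFb⟩ ⟨|D|, hGb⟩ hco
    exact le_trans step2 step1

theorem weak_comonotony_independent
    {Ω : Type*} [MeasurableSpace Ω] (P : Measure Ω) [IsProbabilityMeasure P]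
    {n : ℕ} (X : Fin (n + 1) → Ω → ℝ) (hXm : ∀ i, Measurable (X i))
    (hindep : iIndepFun X P)
    (Φ Ψ : (Fin (n + 1) → ℝ) → ℝ) (hΦm : Measurable Φ) (hΨm : Measurable Ψ)
    (hΦb : ∃ C, ∀ x, |Φ x| ≤ C) (hΨb : ∃ C, ∀ x, |Ψ x| ≤ C)
    (hsec : ∀ i : Fin (n + 1), ∀ x y : Fin (n + 1) → ℝ, (∀ j, j < i → x j = y j) →
      ((Monotone (fun t => Φ (Function.update x i t)) ∧
        Monotone (fun t => Ψ (Function.update x i t)) ∧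
        Monotone (fun t => Φ (Function.update y i t)) ∧
        Monotone (fun t => Ψ (Function.update y i t))) ∨
       (Antitone (fun t => Φ (Function.update x i t)) ∧
        Antitone (fun t => Ψ (Function.update x i t)) ∧
        Antitone (fun t => Φ (Function.update y i t)) ∧
        Antitone (fun t => Ψ (Function.update y i t))))) :
    ∫ ω, Φ (fun i => X i ω) * Ψ (fun i => X i ω) ∂P
      ≥ (∫ ω, Φ (fun i => X i ω) ∂P) * ∫ ω, Ψ (fun i => X i ω) ∂P := by
  have hJm : Measurable (fun ω i => X i ω) := measurable_pi_iff.mpr hXm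
  haveI : ∀ i, IsProbabilityMeasure (P.map (X i)) :=
    fun i => Measure.isProbabilityMeasure_map (hXm i).aemeasurable
  have hmap : P.map (fun ω i => X i ω) = Measure.pi (fun i => P.map (X i)) := by
    refine Eq.symm (Measure.pi_eq fun s hs => ?_)
    rw [Measure.map_apply hJm (MeasurableSet.univ_pi hs)]
    have hpre : (fun ω i => X i ω) ⁻¹' Set.pi Set.univ s
        = ⋂ i ∈ Finset.univ, X i ⁻¹' s i := by
      ext ω; simp [Set.mem_pi]
    rw [hpre, hindep.measure_inter_preimage_eq_mul Finset.univ (fun i _ => hs i)]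
    refine Finset.prod_congr rfl fun i _ => ?_
    rw [Measure.map_apply (hXm i) (hs i)]
  have i1 : ∫ ω, Φ (fun i => X i ω) * Ψ (fun i => X i ω) ∂P
      = ∫ x, Φ x * Ψ x ∂(Measure.pi fun i => P.map (X i)) := by
    rw [← hmap, integral_map (f := fun x => Φ x * Ψ x) hJm.aemeasurable (hΦm.mul hΨm).aestronglyMeasurable]
  have i2 : ∫ ω, Φ (fun i => X i ω) ∂P
      = ∫ x, Φ x ∂(Measure.pi fun i => P.map (X i)) := by
    rw [← hmap, integral_map hJm.aemeasurable hΦm.aestronglyMeasurable]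
  have i3 : ∫ ω, Ψ (fun i => X i ω) ∂P
      = ∫ x, Ψ x ∂(Measure.pi fun i => P.map (X i)) := by
    rw [← hmap, integral_map hJm.aemeasurable hΨm.aestronglyMeasurable]
  rw [i1, i2, i3]
  exact pi_comonotone n (fun i => P.map (X i)) inferInstance Φ Ψ hΦm hΨm hΦb hΨb hsec
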